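/- For every ρ ∈ [0,ρ₀], every d ∈ X, and every dual-feasible point u, weak duality holds: D(u,ρ) ≤ J(d,ρ). -/

import Mathlib

open scoped RealInnerProductSpace
open Finset

noncomputable section

/-- `ℝⁿ` with the Euclidean norm. -/
abbrev Evec (n : ℕ) : Type := EuclideanSpace ℝ (Fin n)

variable {n m : ℕ}

/-- Apply a matrix to a Euclidean vector. -/
def matApply (M : Matrix (Fin n) (Fin n) ℝ) (x : Evec n) : Evec n := Matrix.toEuclideanLin M x

/-- ℓ2 operator norm of a matrix. -/
def opNorm (M : Matrix (Fin n) (Fin n) ℝ) : ℝ :=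
  ‖(LinearMap.toContinuousLinearMap (Matrix.toEuclideanLin M))‖

/-- `H_ρ := ρ H_f + H_0`. -/
def Hmat (Hf H0 : Matrix (Fin n) (Fin n) ℝ) (ρ : ℝ) : Matrix (Fin n) (Fin n) ℝ := ρ • Hf + H0

/-- `l(d,0) = Σ_{i≤m̄} |⟨aⁱ,d⟩+bᵢ| + Σ_{i>m̄} max(⟨aⁱ,d⟩+bᵢ,0)` (indices `i.val < mbar` are
the equality constraints). Note `lpen mbar a b 0 = J⁰`. -/
def lpen (mbar : ℕ) (a : Fin m → Evec n) (b : Fin m → ℝ) (d : Evec n) : ℝ :=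
  ∑ i : Fin m, if (i : ℕ) < mbar then |⟪a i, d⟫ + b i| else max (⟪a i, d⟫ + b i) 0

/-- `J(d,ρ) = ρ⟨g,d⟩ + ½⟨d,H_ρ d⟩ + l(d,0)`. -/
def Jval (mbar : ℕ) (g : Evec n) (a : Fin m → Evec n) (b : Fin m → ℝ)
    (Hf H0 : Matrix (Fin n) (Fin n) ℝ) (ρ : ℝ) (d : Evec n) : ℝ :=
  ρ * ⟪g, d⟫ + (1/2) * ⟪d, matApply (Hmat Hf H0 ρ) d⟫ + lpen mbar a b d

/-- `āⁱ := aⁱ/‖aⁱ‖`. -/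
def abar (a : Fin m → Evec n) (i : Fin m) : Evec n := ‖a i‖⁻¹ • a i

/-- `b̄ᵢ := bᵢ/‖aⁱ‖`. -/
def bbar (a : Fin m → Evec n) (b : Fin m → ℝ) (i : Fin m) : ℝ := b i / ‖a i‖

/-- `Cᵢ`: hyperplane for equality constraints, half-space for inequality constraints. -/
def Cset (mbar : ℕ) (a : Fin m → Evec n) (b : Fin m → ℝ) (i : Fin m) : Set (Evec n) :=
  if (i : ℕ) < mbar then {d | ⟪abar a i, d⟫ + bbar a b i = 0}
  else {d | ⟪abar a i, d⟫ + bbar a b i ≤ 0}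

/-- Real-valued support function `δ*(y|C) = sup_{z∈C} ⟨y,z⟫` (via `sSup`). -/
def suppFn (y : Evec n) (C : Set (Evec n)) : ℝ := sSup ((fun z => ⟪y, z⟫) '' C)

/-- Dual feasibility: `u⁰ + Σᵢ ‖aⁱ‖ uⁱ + u^{m+1} = 0` and `‖uⁱ‖ ≤ 1` for `i = 1,…,m`. -/
def DualFeasible (a : Fin m → Evec n) (u0 : Evec n) (u : Fin m → Evec n) (um1 : Evec n) : Prop :=
  (u0 + ∑ i, ‖a i‖ • u i + um1 = 0) ∧ ∀ i, ‖u i‖ ≤ 1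

/-- Real-valued dual objective
`D(u,ρ) = -½⟨u⁰-ρg, H_ρ⁻¹(u⁰-ρg)⟩ - Σᵢ ‖aⁱ‖ δ*(uⁱ|Cᵢ) - δ*(u^{m+1}|X)`. -/
def Dval (mbar : ℕ) (g : Evec n) (a : Fin m → Evec n) (b : Fin m → ℝ)
    (Hf H0 : Matrix (Fin n) (Fin n) ℝ) (X : Set (Evec n)) (ρ : ℝ)
    (u0 : Evec n) (u : Fin m → Evec n) (um1 : Evec n) : ℝ :=
  -(1/2) * ⟪u0 - ρ • g, matApply (Hmat Hf H0 ρ)⁻¹ (u0 - ρ • g)⟫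
    - ∑ i, ‖a i‖ * suppFn (u i) (Cset mbar a b i)
    - suppFn um1 X

/-- Extended-real-valued support function. -/
def suppFnE (y : Evec n) (C : Set (Evec n)) : EReal :=
  ⨆ z ∈ C, ((⟪y, z⟫ : ℝ) : EReal)

/-- Extended-real-valued dual objective (value in `ℝ ∪ {±∞}`; it is `-∞` when a support
function is `+∞`). -/
def DvalE (mbar : ℕ) (g : Evec n) (a : Fin m → Evec n) (b : Fin m → ℝ)
    (Hf H0 : Matrix (Fin n) (Fin n) ℝ) (X : Set (Evec n)) (ρ : ℝ)
    (u0 : Evec n) (u : Fin m → Evec n) (um1 : Evec n) : EReal :=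
  ((-(1/2) * ⟪u0 - ρ • g, matApply (Hmat Hf H0 ρ)⁻¹ (u0 - ρ • g)⟫ : ℝ) : EReal)
    - ∑ i, (‖a i‖ : EReal) * suppFnE (u i) (Cset mbar a b i)
    - suppFnE um1 X

section helpers

open Matrix in
lemma quadAux {n : ℕ} (M : Matrix (Fin n) (Fin n) ℝ) (hM : M.PosDef) (w d : Fin n → ℝ) :
    -(1/2) * (w ⬝ᵥ M⁻¹ *ᵥ w) ≤ 1/2 * (d ⬝ᵥ M *ᵥ d) - w ⬝ᵥ d := by
  have hsym : Mᵀ = M := by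
    have h := hM.isHermitian
    rwa [Matrix.IsHermitian, Matrix.conjTranspose_eq_transpose_of_trivial] at h
  have hinv : M * M⁻¹ = 1 := Matrix.mul_nonsing_inv M hM.det_pos.ne'.isUnit
  set y := M⁻¹ *ᵥ w with hy
  have hw : M *ᵥ y = w := by rw [hy, Matrix.mulVec_mulVec, hinv, Matrix.one_mulVec]
  have h0 : 0 ≤ (d - y) ⬝ᵥ M *ᵥ (d - y) := by
    simpa using hM.posSemidef.re_dotProduct_nonneg (d - y)
  have e1 : y ⬝ᵥ M *ᵥ d = w ⬝ᵥ d := by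
    rw [Matrix.dotProduct_mulVec, ← Matrix.mulVec_transpose, hsym, hw]
  have e2 : d ⬝ᵥ M *ᵥ y = w ⬝ᵥ d := by rw [hw, dotProduct_comm]
  have e3 : y ⬝ᵥ M *ᵥ y = w ⬝ᵥ y := by rw [hw, dotProduct_comm]
  simp only [sub_dotProduct, dotProduct_sub, Matrix.mulVec_sub] at h0
  rw [e1, e2, e3] at h0
  have e4 : w ⬝ᵥ M⁻¹ *ᵥ w = w ⬝ᵥ y := by rw [hy]
  rw [e4]
  linarith

open Matrix in
lemma inner_eq_dot {n : ℕ} (x y : Evec n) :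
    ⟪x, y⟫ = (WithLp.equiv 2 (Fin n → ℝ) x) ⬝ᵥ (WithLp.equiv 2 (Fin n → ℝ) y) := by
  simp [PiLp.inner_apply, dotProduct, WithLp.equiv]
  exact Finset.sum_congr rfl fun i _ => mul_comm _ _

open Matrix in
lemma inner_matApply_eq {n : ℕ} (M : Matrix (Fin n) (Fin n) ℝ) (x y : Evec n) :
    ⟪x, matApply M y⟫ =
      (WithLp.equiv 2 (Fin n → ℝ) x) ⬝ᵥ (M *ᵥ (WithLp.equiv 2 (Fin n → ℝ) y)) := by
  rw [inner_eq_dot]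
  congr 1

lemma coe_sum_EReal {ι : Type*} (s : Finset ι) (f : ι → ℝ) :
    ((∑ i ∈ s, f i : ℝ) : EReal) = ∑ i ∈ s, ((f i : ℝ) : EReal) :=
  map_sum (⟨⟨Real.toEReal, EReal.coe_zero⟩, fun x y => EReal.coe_add x y⟩ : ℝ →+ EReal) f s

end helpers

/-- For every `ρ ∈ [0,ρ₀]`, every `d ∈ X`, and every dual-feasible point `u`,
weak duality holds: `D(u,ρ) ≤ J(d,ρ)` (with `D` taking values in `ℝ ∪ {−∞}`, formalized
with extended reals). -/
theorem statement_5
    (n m mbar : ℕ) (hn : 1 ≤ n) (hmm : mbar ≤ m)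
    (g : Evec n) (a : Fin m → Evec n) (ha : ∀ i, a i ≠ 0) (b : Fin m → ℝ)
    (Hf H0 : Matrix (Fin n) (Fin n) ℝ) (hHf : Hf.IsHermitian) (hH0 : H0.IsHermitian)
    (ρ₀ : ℝ) (hρ₀ : 0 < ρ₀)
    (hpos : ∀ ρ ∈ Set.Icc (0:ℝ) ρ₀, (Hmat Hf H0 ρ).PosDef)
    (X : Set (Evec n)) (hXne : X.Nonempty) (hXcp : IsCompact X)
    (hXcv : Convex ℝ X) (hX0 : (0 : Evec n) ∈ X) :
    ∀ ρ ∈ Set.Icc (0:ℝ) ρ₀, ∀ d ∈ X,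
      ∀ (u0 : Evec n) (u : Fin m → Evec n) (um1 : Evec n),
        DualFeasible a u0 u um1 →
        DvalE mbar g a b Hf H0 X ρ u0 u um1 ≤ ((Jval mbar g a b Hf H0 ρ d : ℝ) : EReal) := by
  intro ρ hρ d hd u0 u um1 hfeas
  obtain ⟨hsum, hnu⟩ := hfeas
  have hPD : (Hmat Hf H0 ρ).PosDef := hpos ρ hρ
  have hna : ∀ i, (0:ℝ) < ‖a i‖ := fun i => norm_pos_iff.mpr (ha i)
  set c : ℝ := -(1/2) * ⟪u0 - ρ • g, matApply (Hmat Hf H0 ρ)⁻¹ (u0 - ρ • g)⟫ with hc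
  have hnorm1 : ∀ i, ‖abar a i‖ = 1 := by
    intro i
    simp only [abar, norm_smul, Real.norm_eq_abs, abs_of_pos (inv_pos.mpr (hna i))]
    exact inv_mul_cancel₀ (hna i).ne'
  have habar : ∀ i, ⟪abar a i, abar a i⟫ = 1 := by
    intro i
    rw [real_inner_self_eq_norm_mul_norm, hnorm1 i, mul_one]
  set pen : Fin m → ℝ := fun i =>
    if (i : ℕ) < mbar then |⟪a i, d⟫ + b i| else max (⟪a i, d⟫ + b i) 0 with hpen
  set t : Fin m → ℝ := fun i =>
    if (i : ℕ) < mbar then ⟪abar a i, d⟫ + bbar a b i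
    else max (⟪abar a i, d⟫ + bbar a b i) 0 with ht
  set z : Fin m → Evec n := fun i => d - t i • abar a i with hzdef
  have hrel : ∀ i, ⟪abar a i, d⟫ + bbar a b i = (⟪a i, d⟫ + b i) / ‖a i‖ := by
    intro i
    simp only [abar, bbar, real_inner_smul_left]
    field_simp
  have hv : ∀ i, ⟪abar a i, z i⟫ + bbar a b i = (⟪abar a i, d⟫ + bbar a b i) - t i := by
    intro i
    simp only [hzdef, inner_sub_right, real_inner_smul_right, habar i]
    ring
  have hzC : ∀ i, z i ∈ Cset mbar a b i := by
    intro i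
    unfold Cset
    by_cases hi : (i:ℕ) < mbar
    · simp only [hi, if_true, Set.mem_setOf_eq, hv i, ht]
      exact sub_self _
    · simp only [hi, if_false, Set.mem_setOf_eq, hv i, ht]
      exact sub_nonpos.mpr (le_max_left _ _)
  have hq : ∀ i, |⟪u i, abar a i⟫| ≤ 1 := by
    intro i
    calc |⟪u i, abar a i⟫| ≤ ‖u i‖ * ‖abar a i‖ := abs_real_inner_le_norm _ _
      _ ≤ 1 := by rw [hnorm1 i, mul_one]; exact hnu i
  have hkey : ∀ i, ‖a i‖ * ⟪u i, d⟫ - pen i ≤ ‖a i‖ * ⟪u i, z i⟫ := by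
    intro i
    have hiz : ⟪u i, z i⟫ = ⟪u i, d⟫ - t i * ⟪u i, abar a i⟫ := by
      show ⟪u i, d - t i • abar a i⟫ = _
      rw [inner_sub_right, real_inner_smul_right]
    have hmain : (‖a i‖ * t i) * ⟪u i, abar a i⟫ ≤ pen i := by
      by_cases hi : (i:ℕ) < mbar
      · have h1 : ‖a i‖ * t i = ⟪a i, d⟫ + b i := by
          simp only [ht, hi, if_true, hrel i]
          rw [mul_comm, div_mul_cancel₀ _ (hna i).ne']
        rw [h1]
        simp only [hpen, hi, if_true]
        calc (⟪a i, d⟫ + b i) * ⟪u i, abar a i⟫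
            ≤ |(⟪a i, d⟫ + b i) * ⟪u i, abar a i⟫| := le_abs_self _
          _ = |⟪a i, d⟫ + b i| * |⟪u i, abar a i⟫| := abs_mul _ _
          _ ≤ |⟪a i, d⟫ + b i| * 1 := mul_le_mul_of_nonneg_left (hq i) (abs_nonneg _)
          _ = |⟪a i, d⟫ + b i| := mul_one _
      · have h1 : ‖a i‖ * t i = max (⟪a i, d⟫ + b i) 0 := by
          simp only [ht, hi, if_false, hrel i]
          rcases le_total (⟪a i, d⟫ + b i) 0 with h | h
          · have h2 : (⟪a i, d⟫ + b i) / ‖a i‖ ≤ 0 :=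
              div_nonpos_iff.mpr (Or.inr ⟨h, (hna i).le⟩)
            rw [max_eq_right h2, max_eq_right h]
            ring
          · have h2 : (0:ℝ) ≤ (⟪a i, d⟫ + b i) / ‖a i‖ := div_nonneg h (hna i).le
            rw [max_eq_left h2, max_eq_left h]
            rw [mul_comm, div_mul_cancel₀ _ (hna i).ne']
        rw [h1]
        simp only [hpen, hi, if_false]
        have hp0 : (0:ℝ) ≤ max (⟪a i, d⟫ + b i) 0 := le_max_right _ _
        have hq1 : ⟪u i, abar a i⟫ ≤ 1 := le_trans (le_abs_self _) (hq i)
        calc max (⟪a i, d⟫ + b i) 0 * ⟪u i, abar a i⟫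
            ≤ max (⟪a i, d⟫ + b i) 0 * 1 := mul_le_mul_of_nonneg_left hq1 hp0
          _ = max (⟪a i, d⟫ + b i) 0 := mul_one _
    rw [hiz, mul_sub]
    have h3 : ‖a i‖ * (t i * ⟪u i, abar a i⟫) = (‖a i‖ * t i) * ⟪u i, abar a i⟫ := by ring
    rw [h3]
    linarith [hmain]
  have hS : ((∑ i, (‖a i‖ * ⟪u i, d⟫ - pen i) : ℝ) : EReal)
      ≤ ∑ i, (‖a i‖ : EReal) * suppFnE (u i) (Cset mbar a b i) := by
    rw [coe_sum_EReal]
    apply Finset.sum_le_sum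
    intro i _
    have h1 : ((⟪u i, z i⟫ : ℝ) : EReal) ≤ suppFnE (u i) (Cset mbar a b i) :=
      le_iSup₂ (f := fun w (_ : w ∈ Cset mbar a b i) => ((⟪u i, w⟫ : ℝ) : EReal)) (z i) (hzC i)
    calc ((‖a i‖ * ⟪u i, d⟫ - pen i : ℝ) : EReal)
        ≤ ((‖a i‖ * ⟪u i, z i⟫ : ℝ) : EReal) := by exact_mod_cast hkey i
      _ = (‖a i‖ : EReal) * ((⟪u i, z i⟫ : ℝ) : EReal) := by rw [EReal.coe_mul]
      _ ≤ (‖a i‖ : EReal) * suppFnE (u i) (Cset mbar a b i) := by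
          apply mul_le_mul_of_nonneg_left h1
          exact_mod_cast (hna i).le
  have hT : ((⟪um1, d⟫ : ℝ) : EReal) ≤ suppFnE um1 X :=
    le_iSup₂ (f := fun w (_ : w ∈ X) => ((⟪um1, w⟫ : ℝ) : EReal)) d hd
  have hfinal :
      (c - (∑ i, (‖a i‖ * ⟪u i, d⟫ - pen i)) - ⟪um1, d⟫ : ℝ)
        ≤ Jval mbar g a b Hf H0 ρ d := by
    have hquad := quadAux (Hmat Hf H0 ρ) hPD
      (WithLp.equiv 2 (Fin n → ℝ) (u0 - ρ • g)) (WithLp.equiv 2 (Fin n → ℝ) d)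
    rw [← inner_matApply_eq, ← inner_matApply_eq, ← inner_eq_dot] at hquad
    have hwd : ⟪u0 - ρ • g, d⟫ = ⟪u0, d⟫ - ρ * ⟪g, d⟫ := by
      rw [inner_sub_left, real_inner_smul_left]
    rw [hwd] at hquad
    have hsum' : ⟪u0, d⟫ + (∑ i, ‖a i‖ * ⟪u i, d⟫) + ⟪um1, d⟫ = 0 := by
      have h : ⟪u0 + ∑ i, ‖a i‖ • u i + um1, d⟫ = (0:ℝ) := by
        rw [hsum, inner_zero_left]
      rw [inner_add_left, inner_add_left, sum_inner] at h
      simp only [real_inner_smul_left] at h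
      linarith [h]
    have hlpen : lpen mbar a b d = ∑ i, pen i := by
      simp only [lpen, hpen]
    unfold Jval
    rw [hlpen, Finset.sum_sub_distrib, hc]
    linarith [hquad, hsum']
  calc DvalE mbar g a b Hf H0 X ρ u0 u um1
      ≤ ((c - (∑ i, (‖a i‖ * ⟪u i, d⟫ - pen i)) - ⟪um1, d⟫ : ℝ) : EReal) := by
        unfold DvalE
        rw [EReal.coe_sub, EReal.coe_sub, ← hc]
        exact EReal.sub_le_sub (EReal.sub_le_sub le_rfl hS) hT
    _ ≤ ((Jval mbar g a b Hf H0 ρ d : ℝ) : EReal) := EReal.coe_le_coe_iff.mpr hfinal
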